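/- arXiv:1901.06554 — 5 statements merged into one kernel-verified Lean document; each statement's English description precedes it below -/
import Mathlib

section
/- If S = V₋P M_L and S' = V₋P' M_{L'} with P, P' symmetric and L, L' invertible, then S' S⁻¹ = V₋(P' - (L⁻¹L')ᵀ P (L⁻¹L')) M_{L⁻¹L'}. -/
open Matrix

/-- The shear matrix V₋P = [[I, 0], [P, I]]. -/
noncomputable def Vm {n : ℕ} (P : Matrix (Fin n) (Fin n) ℝ) :
    Matrix (Fin n ⊕ Fin n) (Fin n ⊕ Fin n) ℝ :=
  fromBlocks 1 0 P 1

/-- The rescaling matrix M_L = [[L⁻¹, 0], [0, Lᵀ]]. -/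
noncomputable def Mm {n : ℕ} (L : Matrix (Fin n) (Fin n) ℝ) :
    Matrix (Fin n ⊕ Fin n) (Fin n ⊕ Fin n) ℝ :=
  fromBlocks L⁻¹ 0 0 Lᵀ

theorem local_group_quotient {n : ℕ} (P P' L L' : Matrix (Fin n) (Fin n) ℝ)
    (hP : Pᵀ = P) (hP' : P'ᵀ = P') (hL : IsUnit L.det) (hL' : IsUnit L'.det) :
    (Vm P' * Mm L') * (Vm P * Mm L)⁻¹ =
      Vm (P' - (L⁻¹ * L')ᵀ * P * (L⁻¹ * L')) * Mm (L⁻¹ * L') := by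
  have hLT : IsUnit Lᵀ.det := by rwa [Matrix.det_transpose]
  have hinv : (Vm P * Mm L)⁻¹ = Mm L⁻¹ * Vm (-P) := by
    apply Matrix.inv_eq_right_inv
    simp [Vm, Mm, Matrix.fromBlocks_multiply, Matrix.nonsing_inv_nonsing_inv L hL,
      Matrix.transpose_nonsing_inv,
      Matrix.mul_nonsing_inv L hL, Matrix.nonsing_inv_mul L hL,
      Matrix.mul_nonsing_inv _ hLT, Matrix.mul_nonsing_inv_cancel_right L _ hL,
      Matrix.mul_nonsing_inv_cancel_left _ _ hLT,
      ← Matrix.fromBlocks_one, Matrix.mul_assoc]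
  have h1 : L.det ≠ 0 := isUnit_iff_ne_zero.mp hL
  have h2 : L'.det ≠ 0 := isUnit_iff_ne_zero.mp hL'
  have hQ : IsUnit (L⁻¹ * L').det := by
    rw [Matrix.det_mul, Matrix.det_nonsing_inv]
    exact isUnit_iff_ne_zero.mpr
      (mul_ne_zero (by simp [Ring.inverse_eq_inv', h1]) h2)
  have hQ2 : (P' - (L⁻¹ * L')ᵀ * P * (L⁻¹ * L')) * (L⁻¹ * L')⁻¹
      = P' * (L⁻¹ * L')⁻¹ - (L⁻¹ * L')ᵀ * P := by
    rw [Matrix.sub_mul, Matrix.mul_nonsing_inv_cancel_right _ _ hQ]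
  rw [hinv, show Vm P' * Mm L' * (Mm L⁻¹ * Vm (-P))
      = Vm P' * (Mm L' * Mm L⁻¹) * Vm (-P) by noncomm_ring]
  have hMM : Mm L' * Mm L⁻¹ = Mm (L⁻¹ * L') := by
    simp [Mm, Matrix.fromBlocks_multiply, Matrix.mul_inv_rev, Matrix.transpose_mul,
      Matrix.nonsing_inv_nonsing_inv L hL]
  rw [hMM]
  have hc : L⁻¹ * (L' * (L⁻¹ * L')⁻¹) = 1 := by
    rw [Matrix.mul_inv_rev, Matrix.nonsing_inv_nonsing_inv L hL,
      Matrix.mul_nonsing_inv_cancel_left L' L hL', Matrix.nonsing_inv_mul L hL]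
  simp [Vm, Mm, Matrix.fromBlocks_multiply, hQ2, Matrix.sub_mul, Matrix.transpose_mul,
    Matrix.mul_assoc, hc, sub_eq_add_neg, Matrix.add_mul, Matrix.neg_mul, Matrix.mul_nonsing_inv _ hQ]
end

section
/- Pre-Iwasawa factorization: every real 2n×2n symplectic matrix S = [[A, B], [C, D]] can be written S = V₋P M_L U where P = (CAᵀ + DBᵀ)(AAᵀ + BBᵀ)⁻¹ is symmetric, L = (AAᵀ + BBᵀ)^{-1/2} is symmetric positive definite, and U = [[X, Y], [-Y, X]] with X = (AAᵀ + BBᵀ)^{-1/2}A, Y = (AAᵀ + BBᵀ)^{-1/2}B is a symplectic rotation (U is orthogonal and symplectic). -/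
open Matrix

noncomputable def J (n : ℕ) : Matrix (Fin n ⊕ Fin n) (Fin n ⊕ Fin n) ℝ :=
  fromBlocks 0 1 (-1) 0

private lemma aux_shift {M : Type*} [AddCommGroup M] {x y z : M} (h : -x + y = z) :
    y = z + x := by rw [← h]; abel

/-- Pre-Iwasawa factorization.  Here `L` is the inverse of the (unique) positive
definite square root of `A * Aᵀ + B * Bᵀ`, i.e. `L = (AAᵀ + BBᵀ)^(-1/2)`,
`P = (CAᵀ + DBᵀ)(AAᵀ + BBᵀ)⁻¹`, `X = L * A` and `Y = L * B`. -/
theorem pre_iwasawa_factorization {n : ℕ} (A B C D L : Matrix (Fin n) (Fin n) ℝ)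
    (hsymp : (fromBlocks A B C D)ᵀ * J n * fromBlocks A B C D = J n)
    (hL : L.PosDef) (hLsq : L * L = (A * Aᵀ + B * Bᵀ)⁻¹) :
    ((C * Aᵀ + D * Bᵀ) * (A * Aᵀ + B * Bᵀ)⁻¹)ᵀ
        = (C * Aᵀ + D * Bᵀ) * (A * Aᵀ + B * Bᵀ)⁻¹ ∧
    fromBlocks A B C D =
      Vm ((C * Aᵀ + D * Bᵀ) * (A * Aᵀ + B * Bᵀ)⁻¹) * Mm L *
        fromBlocks (L * A) (L * B) (-(L * B)) (L * A) ∧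
    (fromBlocks (L * A) (L * B) (-(L * B)) (L * A))ᵀ * J n *
        fromBlocks (L * A) (L * B) (-(L * B)) (L * A) = J n ∧
    (fromBlocks (L * A) (L * B) (-(L * B)) (L * A))ᵀ *
        fromBlocks (L * A) (L * B) (-(L * B)) (L * A) = 1 := by
  -- basic facts about J
  have hJJ : J n * J n = -1 := by
    rw [show J n = fromBlocks 0 1 (-1) 0 from rfl]
    simp only [fromBlocks_multiply, Matrix.mul_zero, Matrix.mul_one, Matrix.mul_neg,
      Matrix.zero_mul, Matrix.one_mul, Matrix.neg_mul, zero_add, add_zero, neg_zero]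
    rw [← fromBlocks_one, fromBlocks_neg]
    simp
  -- block relations from SᵀJS = J
  have H := hsymp
  rw [show J n = fromBlocks 0 1 (-1) 0 from rfl] at H
  simp only [fromBlocks_transpose, fromBlocks_multiply, Matrix.mul_zero, Matrix.mul_one,
    Matrix.mul_neg, zero_add, add_zero, Matrix.neg_mul, Matrix.zero_mul] at H
  rw [fromBlocks_inj] at H
  obtain ⟨h11, h12, h21, h22⟩ := H
  have hACp : Aᵀ * C = Cᵀ * A := by have := aux_shift h11; rw [this, zero_add]
  have hADp : Aᵀ * D = 1 + Cᵀ * B := aux_shift h12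
  have hBCp : Bᵀ * C = -1 + Dᵀ * A := aux_shift h21
  have hBDp : Bᵀ * D = Dᵀ * B := by have := aux_shift h22; rw [this, zero_add]
  -- S J Sᵀ = J
  set S := fromBlocks A B C D with hSdef
  have hK : ((-(J n)) * Sᵀ * J n) * S = 1 := by
    calc ((-(J n)) * Sᵀ * J n) * S = (-(J n)) * (Sᵀ * J n * S) := by
          simp only [Matrix.mul_assoc]
      _ = (-(J n)) * J n := by rw [hsymp]
      _ = 1 := by rw [Matrix.neg_mul, hJJ, neg_neg]
  have hK' : S * ((-(J n)) * Sᵀ * J n) = 1 := mul_eq_one_comm.mp hK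
  have hS' : S * J n * Sᵀ = J n := by
    have h2 := congrArg (· * J n) hK'
    simp only [Matrix.mul_assoc, Matrix.neg_mul, Matrix.mul_neg, Matrix.one_mul, one_mul] at h2 ⊢
    rw [hJJ] at h2
    simp only [Matrix.mul_neg, Matrix.mul_one, neg_neg] at h2
    exact h2
  rw [hSdef, show J n = fromBlocks 0 1 (-1) 0 from rfl] at hS'
  simp only [fromBlocks_transpose, fromBlocks_multiply, Matrix.mul_zero, Matrix.mul_one,
    Matrix.mul_neg, zero_add, add_zero, Matrix.neg_mul, Matrix.zero_mul] at hS'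
  rw [fromBlocks_inj] at hS'
  obtain ⟨g11, g12, g21, g22⟩ := hS'
  have hABt : A * Bᵀ = B * Aᵀ := by have := aux_shift g11; rw [this, zero_add]
  have hADt : A * Dᵀ = 1 + B * Cᵀ := aux_shift g12
  have hCBt : C * Bᵀ = -1 + D * Aᵀ := aux_shift g21
  have hCDt : C * Dᵀ = D * Cᵀ := by have := aux_shift g22; rw [this, zero_add]
  clear h11 h12 h21 h22 g11 g12 g21 g22 hK hK' hsymp
  -- invertibility of Q = A Aᵀ + B Bᵀ
  set Q : Matrix (Fin n) (Fin n) ℝ := A * Aᵀ + B * Bᵀ with hQdef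
  have hLt : Lᵀ = L := by
    rw [← conjTranspose_eq_transpose_of_trivial]; exact hL.isHermitian
  have hLunit : IsUnit L := (isUnit_iff_isUnit_det L).mpr (isUnit_iff_ne_zero.mpr hL.det_pos.ne')
  have hQunit : IsUnit Q := isUnit_nonsing_inv_iff.mp (hLsq ▸ hLunit.mul hLunit)
  have hQdet : IsUnit Q.det := (isUnit_iff_isUnit_det Q).mp hQunit
  have hLdet : IsUnit L.det := (isUnit_iff_isUnit_det L).mp hLunit
  have hQT : Qᵀ = Q := by
    rw [hQdef, transpose_add, transpose_mul, transpose_mul, transpose_transpose,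
      transpose_transpose]
  have hQinvT : (Q⁻¹)ᵀ = Q⁻¹ := by rw [transpose_nonsing_inv, hQT]
  have hQQi : Q * Q⁻¹ = 1 := mul_nonsing_inv Q hQdet
  have hQiQ : Q⁻¹ * Q = 1 := nonsing_inv_mul Q hQdet
  -- right-multiplied relations
  have hACr : ∀ M : Matrix (Fin n) (Fin n) ℝ, Aᵀ * (C * M) = Cᵀ * (A * M) := fun M => by
    rw [← Matrix.mul_assoc, hACp, Matrix.mul_assoc]
  have hADr : ∀ M : Matrix (Fin n) (Fin n) ℝ, Aᵀ * (D * M) = M + Cᵀ * (B * M) := fun M => by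
    rw [← Matrix.mul_assoc, hADp, Matrix.add_mul, Matrix.one_mul, Matrix.mul_assoc]
  have hBCr : ∀ M : Matrix (Fin n) (Fin n) ℝ, Bᵀ * (C * M) = -M + Dᵀ * (A * M) := fun M => by
    rw [← Matrix.mul_assoc, hBCp, Matrix.add_mul, Matrix.neg_mul, Matrix.one_mul,
      Matrix.mul_assoc]
  have hBDr : ∀ M : Matrix (Fin n) (Fin n) ℝ, Bᵀ * (D * M) = Dᵀ * (B * M) := fun M => by
    rw [← Matrix.mul_assoc, hBDp, Matrix.mul_assoc]
  -- the key commutation identity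
  have hcore : (A * Cᵀ + B * Dᵀ) * Q = Q * (C * Aᵀ + D * Bᵀ) := by
    rw [hQdef]
    simp only [Matrix.add_mul, Matrix.mul_add, Matrix.mul_assoc]
    rw [hACr, hADr, hBCr, hBDr]
    simp only [Matrix.mul_add, Matrix.mul_neg]
    rw [hABt]
    abel
  have hPcomm : (C * Aᵀ + D * Bᵀ) * Q⁻¹ = Q⁻¹ * (A * Cᵀ + B * Dᵀ) := by
    calc (C * Aᵀ + D * Bᵀ) * Q⁻¹ = Q⁻¹ * Q * ((C * Aᵀ + D * Bᵀ) * Q⁻¹) := by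
          rw [hQiQ, Matrix.one_mul]
      _ = Q⁻¹ * ((A * Cᵀ + B * Dᵀ) * (Q * Q⁻¹)) := by
          simp only [Matrix.mul_assoc, ← hcore]
          simp only [← Matrix.mul_assoc, hcore]
      _ = Q⁻¹ * (A * Cᵀ + B * Dᵀ) := by rw [hQQi, Matrix.mul_one]
  -- Claim 1 : P is symmetric
  have claim1 : ((C * Aᵀ + D * Bᵀ) * Q⁻¹)ᵀ = (C * Aᵀ + D * Bᵀ) * Q⁻¹ := by
    rw [transpose_mul, hQinvT, transpose_add, transpose_mul, transpose_mul,
      transpose_transpose, transpose_transpose, hPcomm]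
  -- helpers for L
  have hLiL : ∀ M : Matrix (Fin n) (Fin n) ℝ, L⁻¹ * (L * M) = M := fun M => by
    rw [← Matrix.mul_assoc, nonsing_inv_mul L hLdet, Matrix.one_mul]
  have hLLr : ∀ M : Matrix (Fin n) (Fin n) ℝ, L * (L * M) = Q⁻¹ * M := fun M => by
    rw [← Matrix.mul_assoc, hLsq]
  -- the two defining relations for C and D
  have hC : Q⁻¹ * ((A * Cᵀ + B * Dᵀ) * A - B) = C := by
    have hQC : (A * Cᵀ + B * Dᵀ) * A - B = Q * C := by
      rw [hQdef]
      simp only [Matrix.add_mul, Matrix.mul_assoc]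
      rw [hACp, hBCp]
      simp only [Matrix.mul_add, Matrix.mul_neg, Matrix.mul_one]
      abel
    rw [hQC, ← Matrix.mul_assoc, hQiQ, Matrix.one_mul]
  have hD : Q⁻¹ * ((A * Cᵀ + B * Dᵀ) * B + A) = D := by
    have hQD : (A * Cᵀ + B * Dᵀ) * B + A = Q * D := by
      rw [hQdef]
      simp only [Matrix.add_mul, Matrix.mul_assoc]
      rw [hADp, hBDp, show Cᵀ * B = -1 + Aᵀ * D from by rw [hADp]; abel]
      simp only [Matrix.mul_add, Matrix.mul_neg, Matrix.mul_one]
      abel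
    rw [hQD, ← Matrix.mul_assoc, hQiQ, Matrix.one_mul]
  -- Claim 2 : the factorization
  have claim2 : S = Vm ((C * Aᵀ + D * Bᵀ) * Q⁻¹) * Mm L *
      fromBlocks (L * A) (L * B) (-(L * B)) (L * A) := by
    rw [hSdef, Vm, Mm, hLt]
    simp only [fromBlocks_multiply, Matrix.mul_zero, Matrix.mul_one, Matrix.mul_neg,
      Matrix.zero_mul, Matrix.one_mul, Matrix.neg_mul, zero_add, add_zero]
    rw [fromBlocks_inj]
    refine ⟨?_, ?_, ?_, ?_⟩
    · rw [hLiL A]; simp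
    · exact (hLiL B).symm
    · rw [Matrix.mul_assoc, hLiL, hLLr, hPcomm,
        show Q⁻¹ * (A * Cᵀ + B * Dᵀ) * A + -(Q⁻¹ * B)
            = Q⁻¹ * ((A * Cᵀ + B * Dᵀ) * A - B) from by
          simp only [Matrix.mul_sub, sub_eq_add_neg, Matrix.mul_neg, Matrix.mul_add,
            Matrix.add_mul, Matrix.mul_assoc], hC]
    · rw [Matrix.mul_assoc, hLiL, hLLr, hPcomm,
        show Q⁻¹ * (A * Cᵀ + B * Dᵀ) * B + Q⁻¹ * A
            = Q⁻¹ * ((A * Cᵀ + B * Dᵀ) * B + A) from by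
          simp only [Matrix.mul_add, Matrix.add_mul, Matrix.mul_assoc], hD]
  -- the orthogonality facts F1, F2 via the matrix R = [[A, B], [-B, A]]
  set R : Matrix (Fin n ⊕ Fin n) (Fin n ⊕ Fin n) ℝ := fromBlocks A B (-B) A with hRdef
  set G : Matrix (Fin n ⊕ Fin n) (Fin n ⊕ Fin n) ℝ := fromBlocks Q⁻¹ 0 0 Q⁻¹ with hGdef
  have hRK : R * (Rᵀ * G) = 1 := by
    have hRRT : R * Rᵀ = fromBlocks Q 0 0 Q := by
      rw [hRdef]
      simp only [fromBlocks_transpose, fromBlocks_multiply, transpose_neg, Matrix.mul_neg,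
        Matrix.neg_mul, neg_neg]
      rw [fromBlocks_inj]
      refine ⟨rfl, ?_, ?_, ?_⟩
      · rw [hABt]; abel
      · rw [hABt]; abel
      · rw [hQdef]; abel
    rw [← Matrix.mul_assoc, hRRT, hGdef]
    simp only [fromBlocks_multiply, Matrix.mul_zero, Matrix.zero_mul, zero_add, add_zero, hQQi]
    exact fromBlocks_one
  have hKR : (Rᵀ * G) * R = 1 := mul_eq_one_comm.mp hRK
  rw [hRdef, hGdef, ← fromBlocks_one] at hKR
  simp only [fromBlocks_transpose, fromBlocks_multiply, transpose_neg, Matrix.mul_zero,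
    Matrix.zero_mul, zero_add, add_zero, Matrix.mul_neg, Matrix.neg_mul, neg_neg,
    Matrix.mul_assoc] at hKR
  rw [fromBlocks_inj] at hKR
  obtain ⟨f11, f12, f21, f22⟩ := hKR
  have claim3 : (fromBlocks (L * A) (L * B) (-(L * B)) (L * A))ᵀ * J n *
      fromBlocks (L * A) (L * B) (-(L * B)) (L * A) = J n := by
    rw [show J n = fromBlocks 0 1 (-1) 0 from rfl]
    simp only [fromBlocks_transpose, fromBlocks_multiply, transpose_neg, transpose_mul,
      Matrix.mul_zero, Matrix.mul_one, Matrix.mul_neg, Matrix.neg_mul, neg_neg, zero_add,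
      add_zero, Matrix.zero_mul, Matrix.mul_assoc, hLt, hLLr]
    rw [fromBlocks_inj]
    exact ⟨f21, f22, by rw [← neg_add, f11], by rw [← f21]; abel⟩
  have claim4 : (fromBlocks (L * A) (L * B) (-(L * B)) (L * A))ᵀ *
      fromBlocks (L * A) (L * B) (-(L * B)) (L * A) = 1 := by
    rw [← fromBlocks_one]
    simp only [fromBlocks_transpose, fromBlocks_multiply, transpose_neg, transpose_mul,
      Matrix.mul_zero, Matrix.mul_one, Matrix.mul_neg, Matrix.neg_mul, neg_neg, zero_add,
      add_zero, Matrix.zero_mul, Matrix.mul_assoc, hLt, hLLr]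
    rw [fromBlocks_inj]
    exact ⟨f11, f12, f21, f22⟩
  exact ⟨claim1, claim2, claim3, claim4⟩
end

section
/- Uniqueness of the pre-Iwasawa factorization: if V₋P M_L U = V₋P' M_{L'} U' with P, P' symmetric, L, L' symmetric positive definite, and U, U' symplectic rotations, then P = P', L = L', and U = U'. -/
open Matrix

theorem pre_iwasawa_uniqueness {n : ℕ} (P P' L L' : Matrix (Fin n) (Fin n) ℝ)
    (U U' : Matrix (Fin n ⊕ Fin n) (Fin n ⊕ Fin n) ℝ)
    (hP : Pᵀ = P) (hP' : P'ᵀ = P') (hL : L.PosDef) (hL' : L'.PosDef)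
    (hU : Uᵀ * J n * U = J n) (hUorth : Uᵀ * U = 1)
    (hU' : U'ᵀ * J n * U' = J n) (hU'orth : U'ᵀ * U' = 1)
    (heq : Vm P * Mm L * U = Vm P' * Mm L' * U') :
    P = P' ∧ L = L' ∧ U = U' := by
  have hLs : Lᵀ = L := by simpa using hL.isHermitian.eq
  have hL's : L'ᵀ = L' := by simpa using hL'.isHermitian.eq
  have hLis : (L⁻¹)ᵀ = L⁻¹ := by rw [Matrix.transpose_nonsing_inv, hLs]
  have hL'is : (L'⁻¹)ᵀ = L'⁻¹ := by rw [Matrix.transpose_nonsing_inv, hL's]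
  have hUU : U * Uᵀ = 1 := mul_eq_one_comm.mp hUorth
  have hU'U' : U' * U'ᵀ = 1 := mul_eq_one_comm.mp hU'orth
  obtain ⟨S, hS⟩ : ∃ S, S = Vm P * Mm L := ⟨_, rfl⟩
  obtain ⟨S', hS'⟩ : ∃ S', S' = Vm P' * Mm L' := ⟨_, rfl⟩
  rw [← hS, ← hS'] at heq
  have key : S * Sᵀ = S' * S'ᵀ := by
    calc S * Sᵀ = (S * U) * (S * U)ᵀ := by
          rw [Matrix.transpose_mul, Matrix.mul_assoc, ← Matrix.mul_assoc U, hUU,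
            Matrix.one_mul]
      _ = (S' * U') * (S' * U')ᵀ := by rw [heq]
      _ = S' * S'ᵀ := by
          rw [Matrix.transpose_mul, Matrix.mul_assoc, ← Matrix.mul_assoc U', hU'U',
            Matrix.one_mul]
  have hSblock : S * Sᵀ = fromBlocks (L⁻¹ * L⁻¹) (L⁻¹ * (L⁻¹ * P)) (P * L⁻¹ * L⁻¹)
      (P * L⁻¹ * (L⁻¹ * P) + L * L) := by
    simp [hS, Vm, Mm, Matrix.fromBlocks_multiply, Matrix.fromBlocks_transpose, hLs, hLis,
      Matrix.transpose_mul, hP, Matrix.mul_assoc]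
  have hS'block : S' * S'ᵀ = fromBlocks (L'⁻¹ * L'⁻¹) (L'⁻¹ * (L'⁻¹ * P')) (P' * L'⁻¹ * L'⁻¹)
      (P' * L'⁻¹ * (L'⁻¹ * P') + L' * L') := by
    simp [hS', Vm, Mm, Matrix.fromBlocks_multiply, Matrix.fromBlocks_transpose, hL's, hL'is,
      Matrix.transpose_mul, hP', Matrix.mul_assoc]
  rw [hSblock, hS'block, Matrix.fromBlocks_inj] at key
  obtain ⟨h11, h12, h21, -⟩ := key
  -- L = L'
  have hLiEq : L⁻¹ = L'⁻¹ := by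
    open scoped MatrixOrder in
    rw [← CFC.sqrt_sq (L⁻¹) hL.inv.posSemidef.nonneg, ← CFC.sqrt_sq (L'⁻¹) hL'.inv.posSemidef.nonneg]
    rw [pow_two, pow_two, h11]
  have hLL' : L = L' := by
    have h1 : L⁻¹⁻¹ = L := Matrix.nonsing_inv_nonsing_inv L (isUnit_iff_ne_zero.mpr hL.det_pos.ne')
    have h2 : L'⁻¹⁻¹ = L' := Matrix.nonsing_inv_nonsing_inv L' (isUnit_iff_ne_zero.mpr hL'.det_pos.ne')
    rw [← h1, ← h2, hLiEq]
  -- P = P'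
  have hLiU : IsUnit (L⁻¹ * L⁻¹).det := by
    rw [Matrix.det_mul]
    exact (isUnit_iff_ne_zero.mpr hL.inv.det_pos.ne').mul (isUnit_iff_ne_zero.mpr hL.inv.det_pos.ne')
  have hPP' : P = P' := by
    have h21' : P * (L⁻¹ * L⁻¹) = P' * (L⁻¹ * L⁻¹) := by
      rw [← Matrix.mul_assoc, ← Matrix.mul_assoc, h21, hLL']
    calc P = P * (L⁻¹ * L⁻¹) * (L⁻¹ * L⁻¹)⁻¹ := by
          rw [Matrix.mul_nonsing_inv_cancel_right _ _ hLiU]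
      _ = P' * (L⁻¹ * L⁻¹) * (L⁻¹ * L⁻¹)⁻¹ := by rw [h21']
      _ = P' := by rw [Matrix.mul_nonsing_inv_cancel_right _ _ hLiU]
  refine ⟨hPP', hLL', ?_⟩
  have hSeq : S * U = S * U' := by rw [heq, hS', ← hPP', ← hLL', ← hS]
  have hSdet : IsUnit S.det := by
    rw [hS, Matrix.det_mul]
    refine IsUnit.mul ?_ ?_
    · rw [Vm, Matrix.det_fromBlocks_zero₁₂]; simp
    · rw [Mm, Matrix.det_fromBlocks_zero₁₂, hLs]
      exact (isUnit_iff_ne_zero.mpr hL.inv.det_pos.ne').mul (isUnit_iff_ne_zero.mpr hL.det_pos.ne')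
  haveI := S.invertibleOfIsUnitDet hSdet
  calc U = S⁻¹ * (S * U) := by rw [Matrix.inv_mul_cancel_left_of_invertible]
    _ = S⁻¹ * (S * U') := by rw [hSeq]
    _ = U' := by rw [Matrix.inv_mul_cancel_left_of_invertible]
end

section
/- If f : ℝ^{2n} → ℝ^{2n} is an invertible linear map whose transpose-conjugation Fᵀ M_L F is symplectic for every matrix M_L = [[L⁻¹, 0], [0, L]] with L symmetric positive definite, where F = f viewed as a matrix, then F is either symplectic (FᵀJF = J) or antisymplectic (FᵀJF = -J). -/
open Matrix

lemma J_mul_J (n : ℕ) : _root_.J n * _root_.J n = -1 := by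
  rw [_root_.J, fromBlocks_multiply, show (-1 : Matrix (Fin n ⊕ Fin n) (Fin n ⊕ Fin n) ℝ)
    = fromBlocks (-1) 0 0 (-1) by rw [← fromBlocks_one, fromBlocks_neg]; simp]
  simp

lemma J_transpose (n : ℕ) : (_root_.J n)ᵀ = -(_root_.J n) := by
  rw [_root_.J, fromBlocks_transpose, show -(fromBlocks 0 1 (-1) 0 :
    Matrix (Fin n ⊕ Fin n) (Fin n ⊕ Fin n) ℝ) = fromBlocks (-0) (-1) (-(-1)) (-0) by
      rw [fromBlocks_neg]]
  simp

lemma cancelFF {m : Type*} [Fintype m] [DecidableEq m] {F X Y : Matrix m m ℝ}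
    (hF : IsUnit F.det) (h : Fᵀ * X * F = Fᵀ * Y * F) : X = Y := by
  letI := F.invertibleOfIsUnitDet hF
  letI : Invertible Fᵀ := F.invertibleTranspose
  calc X = ⅟(Fᵀ) * (Fᵀ * X * F) * ⅟F := by
        simp [Matrix.mul_assoc]
    _ = ⅟(Fᵀ) * (Fᵀ * Y * F) * ⅟F := by rw [h]
    _ = Y := by simp [Matrix.mul_assoc]

lemma stdTrans {n : ℕ} (i j : Fin n) :
    (Matrix.single i j (1:ℝ))ᵀ = Matrix.single j i 1 := by
  ext a b
  simp [Matrix.single, and_comm]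

lemma scalar_of_commute {n : ℕ} (hn : 0 < n) (B : Matrix (Fin n) (Fin n) ℝ)
    (hc : ∀ C : Matrix (Fin n) (Fin n) ℝ, B * (C * Cᵀ) = (C * Cᵀ) * B) :
    ∃ s : ℝ, B = s • 1 := by
  have offdiag : ∀ i j : Fin n, i ≠ j → B i j = 0 := by
    intro i j hij
    have h1 := hc (Matrix.single j j 1)
    rw [stdTrans, single_mul_single_same, mul_one] at h1
    have e := congrFun (congrFun h1 i) j
    simpa [hij] using e
  have diag : ∀ i j : Fin n, B i i = B j j := by
    intro i j
    rcases eq_or_ne i j with rfl | hij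
    · rfl
    have hCC : (Matrix.single i i (1:ℝ) + Matrix.single j i 1) *
        (Matrix.single i i (1:ℝ) + Matrix.single j i 1)ᵀ =
        Matrix.single i i 1 + Matrix.single i j 1 + Matrix.single j i 1
          + Matrix.single j j 1 := by
      rw [transpose_add, stdTrans, stdTrans, add_mul, mul_add, mul_add,
        single_mul_single_same, single_mul_single_same, single_mul_single_same,
        single_mul_single_same]
      simp only [mul_one]
      abel
    have h1 := hc (Matrix.single i i 1 + Matrix.single j i 1)
    rw [hCC] at h1
    have e := congrFun (congrFun h1 i) j
    rw [mul_add, mul_add, mul_add, add_mul, add_mul, add_mul] at e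
    simp only [Matrix.add_apply] at e
    simp [hij, hij.symm] at e
    linarith [e]
  refine ⟨B ⟨0, hn⟩ ⟨0, hn⟩, ?_⟩
  ext i j
  rcases eq_or_ne i j with rfl | hij
  · simp [diag i ⟨0, hn⟩]
  · simp [offdiag i j hij, Matrix.one_apply_ne hij]

theorem symplectic_or_antisymplectic {n : ℕ}
    (F : Matrix (Fin n ⊕ Fin n) (Fin n ⊕ Fin n) ℝ) (hF : IsUnit F.det)
    (h : ∀ L : Matrix (Fin n) (Fin n) ℝ, L.PosDef →
      (Fᵀ * fromBlocks L⁻¹ 0 0 L * F)ᵀ * J n * (Fᵀ * fromBlocks L⁻¹ 0 0 L * F) = J n) :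
    Fᵀ * J n * F = J n ∨ Fᵀ * J n * F = -(J n) := by
  rcases Nat.eq_zero_or_pos n with hn | hn
  · subst hn
    exact Or.inl (Subsingleton.elim _ _)
  set G : Matrix (Fin n ⊕ Fin n) (Fin n ⊕ Fin n) ℝ := F * _root_.J n * Fᵀ with hGdef
  have e1 : Fᵀ * G * F = _root_.J n := by
    have h1 := h 1 Matrix.PosDef.one
    rw [inv_one, fromBlocks_one] at h1
    simpa [hGdef, transpose_mul, Matrix.mul_assoc] using h1
  have hMGM : ∀ L : Matrix (Fin n) (Fin n) ℝ, L.PosDef →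
      fromBlocks L⁻¹ 0 0 L * G * fromBlocks L⁻¹ 0 0 L = G := by
    intro L hL
    have hLs : Lᵀ = L := by
      rw [← conjTranspose_eq_transpose_of_trivial]; exact hL.isHermitian
    have hMs : (fromBlocks L⁻¹ 0 0 L)ᵀ = fromBlocks L⁻¹ 0 0 L := by
      rw [fromBlocks_transpose, transpose_nonsing_inv, hLs]
      simp
    have hL' := h L hL
    apply cancelFF hF
    rw [e1]
    calc Fᵀ * (fromBlocks L⁻¹ 0 0 L * G * fromBlocks L⁻¹ 0 0 L) * F
        = (Fᵀ * fromBlocks L⁻¹ 0 0 L * F)ᵀ * _root_.J n *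
            (Fᵀ * fromBlocks L⁻¹ 0 0 L * F) := by
          simp only [transpose_mul, transpose_transpose, hMs, hGdef, Matrix.mul_assoc]
      _ = _root_.J n := hL'
  have blocks : ∀ L : Matrix (Fin n) (Fin n) ℝ, L.PosDef →
      L⁻¹ * G.toBlocks₁₁ * L⁻¹ = G.toBlocks₁₁ ∧ L⁻¹ * G.toBlocks₁₂ * L = G.toBlocks₁₂ ∧
      L * G.toBlocks₂₁ * L⁻¹ = G.toBlocks₂₁ ∧ L * G.toBlocks₂₂ * L = G.toBlocks₂₂ := by
    intro L hL
    have e := hMGM L hL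
    rw [← fromBlocks_toBlocks G, fromBlocks_multiply, fromBlocks_multiply] at e
    simp only [Matrix.zero_mul, Matrix.mul_zero, add_zero, zero_add, fromBlocks_inj,
      toBlocks_fromBlocks₁₁, toBlocks_fromBlocks₁₂, toBlocks_fromBlocks₂₁,
      toBlocks_fromBlocks₂₂] at e
    exact e
  have h2 : ((2:ℝ) • (1 : Matrix (Fin n) (Fin n) ℝ)).PosDef := by
    rw [two_smul]
    exact Matrix.PosDef.one.add Matrix.PosDef.one
  have h2inv : ((2:ℝ) • (1 : Matrix (Fin n) (Fin n) ℝ))⁻¹ = (2:ℝ)⁻¹ • 1 := by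
    apply Matrix.inv_eq_left_inv
    rw [smul_mul_smul_comm]
    norm_num
  have kill : ∀ (X : Matrix (Fin n) (Fin n) ℝ) (c : ℝ), c ≠ 1 → c • X = X → X = 0 := by
    intro X c hc hX
    have h5 : ((1:ℝ) - c) • X = 0 := by
      rw [sub_smul, one_smul, hX, sub_self]
    rcases smul_eq_zero.mp h5 with hc' | hx
    · exact absurd (by linarith [sub_eq_zero.mp hc']) hc
    · exact hx
  have hA : G.toBlocks₁₁ = 0 := by
    have e := (blocks _ h2).1
    rw [h2inv, Matrix.smul_mul, Matrix.mul_smul, Matrix.one_mul, Matrix.mul_one,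
      smul_smul] at e
    exact kill _ _ (by norm_num) e
  have hD : G.toBlocks₂₂ = 0 := by
    have e := (blocks _ h2).2.2.2
    rw [Matrix.smul_mul, Matrix.mul_smul, Matrix.one_mul, Matrix.mul_one, smul_smul] at e
    exact kill _ _ (by norm_num) e
  obtain ⟨s, hB⟩ : ∃ s : ℝ, G.toBlocks₁₂ = s • 1 := by
    apply scalar_of_commute hn
    intro C
    have hpd : (C * Cᵀ + 1).PosDef := by
      have hps : (C * Cᵀ).PosSemidef := by
        have := Matrix.posSemidef_self_mul_conjTranspose C
        rwa [conjTranspose_eq_transpose_of_trivial] at this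
      exact Matrix.PosDef.posSemidef_add hps Matrix.PosDef.one
    have hdet : IsUnit (C * Cᵀ + 1).det := hpd.det_pos.ne'.isUnit
    have e := (blocks _ hpd).2.1
    have hBL : G.toBlocks₁₂ * (C * Cᵀ + 1) = (C * Cᵀ + 1) * G.toBlocks₁₂ := by
      calc G.toBlocks₁₂ * (C * Cᵀ + 1)
          = (C * Cᵀ + 1) * ((C * Cᵀ + 1)⁻¹ * G.toBlocks₁₂ * (C * Cᵀ + 1)) := by
            rw [← Matrix.mul_assoc, ← Matrix.mul_assoc, Matrix.mul_nonsing_inv _ hdet,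
              Matrix.one_mul]
        _ = (C * Cᵀ + 1) * G.toBlocks₁₂ := by rw [e]
    rw [mul_add, add_mul, Matrix.mul_one, Matrix.one_mul] at hBL
    exact add_right_cancel hBL
  have hGT : Gᵀ = -G := by
    rw [hGdef, transpose_mul, transpose_mul, transpose_transpose, _root_.J_transpose]
    simp [Matrix.neg_mul, Matrix.mul_neg, Matrix.mul_assoc]
  have hC : G.toBlocks₂₁ = -(s • (1 : Matrix (Fin n) (Fin n) ℝ)) := by
    ext i j
    have e := congrFun (congrFun hGT (Sum.inl j)) (Sum.inr i)
    simp only [transpose_apply, Matrix.neg_apply] at e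
    have e2 : G (Sum.inl j) (Sum.inr i) = (s • (1 : Matrix (Fin n) (Fin n) ℝ)) j i := by
      rw [← hB]; rfl
    show G (Sum.inr i) (Sum.inl j) = -((s • (1 : Matrix (Fin n) (Fin n) ℝ)) i j)
    rw [e, e2]
    rcases eq_or_ne i j with rfl | hij
    · rfl
    · simp [Matrix.one_apply_ne hij, Matrix.one_apply_ne (Ne.symm hij)]
  have hGs : G = s • _root_.J n := by
    rw [← fromBlocks_toBlocks G, hA, hB, hC, hD, _root_.J, fromBlocks_smul]
    simp
  have hsA : s • (Fᵀ * _root_.J n * F) = _root_.J n := by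
    have : Fᵀ * (s • _root_.J n) * F = _root_.J n := by rw [← hGs]; exact e1
    rw [Matrix.mul_smul, Matrix.smul_mul] at this
    exact this
  have hFJF : F * -(_root_.J n) * Fᵀ = (-s) • _root_.J n := by
    rw [Matrix.mul_neg, Matrix.neg_mul, show F * _root_.J n * Fᵀ = s • _root_.J n from hGs,
      neg_smul]
  have hJJJ : _root_.J n * (_root_.J n * _root_.J n) = -(_root_.J n) := by
    rw [J_mul_J, Matrix.mul_neg, Matrix.mul_one]
  have hT : (Fᵀ * _root_.J n * F) * (-(_root_.J n)) * (Fᵀ * _root_.J n * F)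
      = s • (Fᵀ * _root_.J n * F) := by
    calc (Fᵀ * _root_.J n * F) * (-(_root_.J n)) * (Fᵀ * _root_.J n * F)
        = Fᵀ * (_root_.J n * (F * (-(_root_.J n)) * Fᵀ) * (_root_.J n * F)) := by
          simp only [Matrix.mul_assoc, Matrix.neg_mul, Matrix.mul_neg]
      _ = Fᵀ * (_root_.J n * ((-s) • _root_.J n) * (_root_.J n * F)) := by rw [hFJF]
      _ = (-s) • (Fᵀ * (_root_.J n * (_root_.J n * _root_.J n) * F)) := by
          simp only [Matrix.mul_smul, Matrix.smul_mul, Matrix.mul_assoc]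
      _ = (-s) • (Fᵀ * (-(_root_.J n) * F)) := by rw [hJJJ]
      _ = s • (Fᵀ * _root_.J n * F) := by
          simp only [Matrix.neg_mul, Matrix.mul_neg, neg_smul, smul_neg, neg_neg,
            Matrix.mul_assoc]
  have key : (s * s) • _root_.J n = _root_.J n := by
    calc (s * s) • _root_.J n
        = (s * s) • (s • (Fᵀ * _root_.J n * F)) := by rw [hsA]
      _ = (s * s) • ((Fᵀ * _root_.J n * F) * (-(_root_.J n)) * (Fᵀ * _root_.J n * F)) := by
          rw [hT]
      _ = (s • (Fᵀ * _root_.J n * F)) * (-(_root_.J n)) * (s • (Fᵀ * _root_.J n * F)) := by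
          rw [Matrix.smul_mul, Matrix.smul_mul, Matrix.mul_smul, smul_smul]
      _ = _root_.J n * (-(_root_.J n)) * _root_.J n := by rw [hsA]
      _ = _root_.J n := by rw [Matrix.mul_neg, J_mul_J, neg_neg, Matrix.one_mul]
  have hone : _root_.J n (Sum.inl ⟨0, hn⟩) (Sum.inr ⟨0, hn⟩) = 1 := by
    simp [_root_.J, fromBlocks]
  have hss : s * s = 1 := by
    have e := congrFun (congrFun key (Sum.inl ⟨0, hn⟩)) (Sum.inr ⟨0, hn⟩)
    rw [Matrix.smul_apply, hone] at e
    simpa using e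
  have hA' : Fᵀ * _root_.J n * F = s • _root_.J n := by
    have e : (s * s) • (Fᵀ * _root_.J n * F) = s • _root_.J n := by
      rw [← smul_smul, hsA]
    rwa [hss, one_smul] at e
  rcases mul_self_eq_one_iff.mp hss with rfl | rfl
  · left; simpa using hA'
  · right; simpa using hA'
end

section
/- Let (S_t) be a path of symplectic matrices with blocks S_t = [[A_t, B_t], [C_t, D_t]], z_t = (x_t, p_t) a path in ℝ^{2n}, and ε > 0. The orthogonal projection onto ℝⁿ × {0} of the ellipsoid T(z_t) S_t B(ε) (the image of the ball of radius ε under S_t followed by translation by z_t) equals the translate by x_t of the ellipsoid (A_t A_tᵀ + B_t B_tᵀ)^{1/2} Bⁿ(ε), i.e. {x : (A_t A_tᵀ + B_t B_tᵀ)⁻¹(x - x_t)·(x - x_t) ≤ ε²}. -/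
open Matrix

private lemma dot_self_nonneg' {k : Type*} [Fintype k] (v : k → ℝ) : 0 ≤ v ⬝ᵥ v :=
  Finset.sum_nonneg fun _ _ => mul_self_nonneg _

private lemma idem_dot {k : Type*} [Fintype k] [DecidableEq k] (P : Matrix k k ℝ)
    (hPT : Pᵀ = P) (hPP : P * P = P) (u : k → ℝ) :
    (P *ᵥ u) ⬝ᵥ u ≤ u ⬝ᵥ u := by
  set Q : Matrix k k ℝ := 1 - P with hQ
  have hQT : Qᵀ = Q := by simp [hQ, transpose_sub, hPT]
  have hQQ : Q * Q = Q := by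
    simp [hQ, sub_mul, mul_sub, hPP, Matrix.one_mul, Matrix.mul_one]
  have key : (Q *ᵥ u) ⬝ᵥ u = (Q *ᵥ u) ⬝ᵥ (Q *ᵥ u) := by
    conv_rhs => rw [dotProduct_mulVec, ← mulVec_transpose, hQT, mulVec_mulVec, hQQ]
  have h0 : 0 ≤ (Q *ᵥ u) ⬝ᵥ u := key ▸ dot_self_nonneg' _
  have heq : (Q *ᵥ u) ⬝ᵥ u = u ⬝ᵥ u - (P *ᵥ u) ⬝ᵥ u := by
    simp [hQ, sub_mulVec, sub_dotProduct, one_mulVec]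
  linarith [heq ▸ h0]

theorem chalkboard_shadow {n : ℕ} (A B C D : Matrix (Fin n) (Fin n) ℝ)
    (hsymp : (fromBlocks A B C D)ᵀ * J n * fromBlocks A B C D = J n)
    (z : Fin n ⊕ Fin n → ℝ) (ε : ℝ) (hε : 0 < ε) :
    (fun w : Fin n ⊕ Fin n → ℝ => w ∘ Sum.inl) ''
        ((fun u => fromBlocks A B C D *ᵥ u + z) ''
          {u : Fin n ⊕ Fin n → ℝ | u ⬝ᵥ u ≤ ε ^ 2}) =
      {x : Fin n → ℝ |
        ((A * Aᵀ + B * Bᵀ)⁻¹ *ᵥ (x - z ∘ Sum.inl)) ⬝ᵥ (x - z ∘ Sum.inl) ≤ ε ^ 2} := by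
  set S := fromBlocks A B C D with hS
  set M := fromCols A B with hM
  set G := A * Aᵀ + B * Bᵀ with hG
  have hMMt : M * Mᵀ = G := by
    rw [hM, transpose_fromCols, fromCols_mul_fromRows, hG]
  have hGsym : Gᵀ = G := by
    simp [hG, transpose_add, transpose_mul, add_comm]
  -- S has unit determinant
  have hJunit : IsUnit (_root_.J n).det := by
    have h1 : _root_.J n * fromBlocks 0 (-1) 1 0 = 1 := by
      rw [_root_.J, fromBlocks_multiply, ← fromBlocks_one]
      congr 1 <;> simp
    have h2 := congrArg det h1
    rw [det_mul, det_one] at h2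
    exact IsUnit.of_mul_eq_one _ h2
  have hSdet : IsUnit S.det := by
    have h := congrArg det hsymp
    rw [det_mul, det_mul] at h
    exact isUnit_of_mul_isUnit_right (h ▸ hJunit)
  -- kernel of Mᵀ is trivial
  have hker : ∀ v : Fin n → ℝ, Mᵀ *ᵥ v = 0 → v = 0 := by
    intro v hv
    have hST : Sᵀ *ᵥ Sum.elim v 0 = Mᵀ *ᵥ v := by
      rw [hS, fromBlocks_transpose, fromBlocks_mulVec, hM, transpose_fromCols,
        fromRows_mulVec]
      simp
    have hinj : Function.Injective (Sᵀ.mulVec) :=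
      mulVec_injective_iff_isUnit.2 ((isUnit_iff_isUnit_det _).2 (by rwa [det_transpose]))
    have hv0 : Sum.elim v 0 = (0 : Fin n ⊕ Fin n → ℝ) := by
      apply hinj
      rw [hST, hv, mulVec_zero]
    exact funext fun i => congrFun hv0 (Sum.inl i)
  -- G is positive definite, hence invertible
  have hGpd : G.PosDef := by
    rw [posDef_iff_dotProduct_mulVec]
    constructor
    · rw [IsHermitian, conjTranspose_eq_transpose_of_trivial, hGsym]
    · intro x hx
      have hform : star x ⬝ᵥ (G *ᵥ x) = (Mᵀ *ᵥ x) ⬝ᵥ (Mᵀ *ᵥ x) := by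
        rw [star_trivial, ← hMMt, ← mulVec_mulVec, dotProduct_mulVec, ← mulVec_transpose]
      rw [hform]
      rcases lt_or_eq_of_le (dot_self_nonneg' (Mᵀ *ᵥ x)) with h | h
      · exact h
      · exact absurd (hker x (dotProduct_self_eq_zero.1 h.symm)) hx
  have hGdet : IsUnit G.det := (isUnit_iff_isUnit_det _).1 hGpd.isUnit
  have hGG : G * G⁻¹ = 1 := mul_nonsing_inv _ hGdet
  have hGG' : G⁻¹ * G = 1 := nonsing_inv_mul _ hGdet
  have hGinvT : G⁻¹ᵀ = G⁻¹ := by rw [transpose_nonsing_inv, hGsym]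
  -- projection of S-image
  have hproj : ∀ u : Fin n ⊕ Fin n → ℝ, (S *ᵥ u + z) ∘ Sum.inl = M *ᵥ u + z ∘ Sum.inl := by
    intro u
    have h2 : M *ᵥ u = A *ᵥ (u ∘ Sum.inl) + B *ᵥ (u ∘ Sum.inr) := by
      rw [hM, ← fromCols_mulVec_sumElim A B (u ∘ Sum.inl) (u ∘ Sum.inr),
        Sum.elim_comp_inl_inr]
    funext i
    simp [hS, fromBlocks_mulVec, h2]
  ext x
  simp only [Set.mem_image, Set.mem_setOf_eq, exists_exists_and_eq_and]
  constructor
  · rintro ⟨u, hu, rfl⟩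
    rw [hproj u]
    have hy : M *ᵥ u + z ∘ Sum.inl - z ∘ Sum.inl = M *ᵥ u := by simp
    rw [hy]
    set P : Matrix (Fin n ⊕ Fin n) (Fin n ⊕ Fin n) ℝ := Mᵀ * G⁻¹ * M with hP
    have hform : (G⁻¹ *ᵥ (M *ᵥ u)) ⬝ᵥ (M *ᵥ u) = (P *ᵥ u) ⬝ᵥ u := by
      rw [dotProduct_mulVec, ← mulVec_transpose, mulVec_mulVec, mulVec_mulVec, hP,
        Matrix.mul_assoc]
    have hPT : Pᵀ = P := by
      rw [hP, transpose_mul, transpose_mul, transpose_transpose, hGinvT, Matrix.mul_assoc]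
    have hPP : P * P = P := by
      have hassoc : Mᵀ * G⁻¹ * M * (Mᵀ * G⁻¹ * M) = Mᵀ * (G⁻¹ * (M * Mᵀ * (G⁻¹ * M))) := by
        simp only [Matrix.mul_assoc]
      rw [hP, hassoc, hMMt, ← Matrix.mul_assoc G, hGG, Matrix.one_mul, ← Matrix.mul_assoc]
    rw [hform]
    exact le_trans (idem_dot P hPT hPP u) hu
  · intro hx
    set y := x - z ∘ Sum.inl with hy
    refine ⟨Mᵀ *ᵥ (G⁻¹ *ᵥ y), ?_, ?_⟩
    · have h1 : (Mᵀ *ᵥ (G⁻¹ *ᵥ y)) ⬝ᵥ (Mᵀ *ᵥ (G⁻¹ *ᵥ y)) = (G⁻¹ *ᵥ y) ⬝ᵥ y := by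
        rw [dotProduct_mulVec, vecMul_transpose, mulVec_mulVec, mulVec_mulVec, hMMt, hGG,
          one_mulVec, dotProduct_mulVec, ← mulVec_transpose, hGinvT]
      rw [h1]
      exact hx
    · rw [hproj]
      have hMy : M *ᵥ (Mᵀ *ᵥ (G⁻¹ *ᵥ y)) = y := by
        rw [mulVec_mulVec, mulVec_mulVec, hMMt, hGG, one_mulVec]
      rw [hMy, hy]
      funext i
      simp
end
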